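/- If X ⊆ ω^ω (viewed as the irrationals) is such that for every Borel function x ↦ f^x ∈ ω^ω there exists g ∈ ω^ω with ∀x ∈ X ∃^∞ n (f^x(n) = g(n)), then for any Borel assignment x ↦ (Y^x, f^x) ∈ [ω]^ω × ω^ω there exists g ∈ ω^ω such that for every x ∈ X there are infinitely many n ∈ Y^x with f^x(n) = g(n). -/

import Mathlib

/-- Encode the values `v 0, …, v (L-1)` into a single natural number. -/
def encF (v : ℕ → ℕ) : ℕ → ℕ
  | 0 => 0
  | n + 1 => Nat.pair (encF v n) (v n)

/-- Iterate `Nat.unpair.1`. -/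
def iterFst (c : ℕ) : ℕ → ℕ
  | 0 => c
  | j + 1 => (iterFst c j).unpair.1

lemma iterFst_encF (v : ℕ → ℕ) : ∀ j L, j ≤ L → iterFst (encF v L) j = encF v (L - j) := by
  intro j
  induction j with
  | zero => intro L _; simp [iterFst]
  | succ n ih =>
      intro L hL
      have h1 : n ≤ L := by omega
      have h2 : L - n = (L - (n + 1)) + 1 := by omega
      rw [iterFst, ih L h1, h2, encF, Nat.unpair_pair]

/-- Extract the `i`-th entry from a code of length `L`. -/
def entryF (c L i : ℕ) : ℕ := (iterFst c (L - 1 - i)).unpair.2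

lemma entryF_encF (v : ℕ → ℕ) (L i : ℕ) (hi : i < L) : entryF (encF v L) L i = v i := by
  have h1 : L - 1 - i ≤ L := by omega
  have h2 : L - (L - 1 - i) = i + 1 := by omega
  rw [entryF, iterFst_encF v _ L h1, h2, encF, Nat.unpair_pair]

/-- The `i`-th claim decoded from `g'`: a coded pair (position, value). -/
noncomputable def claimOf (g' : ℕ → ℕ) (i : ℕ) : ℕ :=
  if i = 0 then 0
  else entryF (g' (Nat.log 2 i)) (2 ^ Nat.log 2 i) (i - 2 ^ Nat.log 2 i)

/-- The final diagonal function built from `g'`: the value of the first claim at `m`. -/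
noncomputable def gOf (g' : ℕ → ℕ) (m : ℕ) : ℕ :=
  (claimOf g' (sInf {j | (claimOf g' j).unpair.1 = m})).unpair.2

theorem nice_set_diagonalization (X : Set (ℕ → ℕ))
    (hnice : ∀ F : (ℕ → ℕ) → ℕ → ℕ, Measurable F →
      ∃ g : ℕ → ℕ, ∀ x ∈ X, {n : ℕ | F x n = g n}.Infinite)
    (y : (ℕ → ℕ) → ℕ → ℕ) (f : (ℕ → ℕ) → ℕ → ℕ)
    (hy : Measurable y) (hf : Measurable f)
    (hymono : ∀ x, StrictMono (y x)) :
    ∃ g : ℕ → ℕ, ∀ x ∈ X,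
      {n : ℕ | (∃ k, y x k = n) ∧ f x n = g n}.Infinite := by
  classical
  -- the block-coding function
  set H : (ℕ → ℕ) → ℕ → ℕ := fun x k =>
    encF (fun t => Nat.pair (y x (2 ^ k + t)) (f x (y x (2 ^ k + t)))) (2 ^ k) with hH
  -- measurability
  have hyi : ∀ i, Measurable fun x : ℕ → ℕ => y x i := fun i => (measurable_pi_apply i).comp hy
  have hev : Measurable fun p : (ℕ → ℕ) × ℕ => p.1 p.2 :=
    measurable_from_prod_countable_left fun n => measurable_pi_apply n
  have hfyi : ∀ i, Measurable fun x : ℕ → ℕ => f x (y x i) := by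
    intro i
    exact hev.comp (hf.prodMk (hyi i))
  have hpair : ∀ i, Measurable fun x : ℕ → ℕ => Nat.pair (y x i) (f x (y x i)) := by
    intro i
    exact (measurable_of_countable (fun p : ℕ × ℕ => Nat.pair p.1 p.2)).comp
      ((hyi i).prodMk (hfyi i))
  have hencF : ∀ (L : ℕ) (v : (ℕ → ℕ) → ℕ → ℕ), (∀ t, Measurable fun x => v x t) →
      Measurable fun x => encF (v x) L := by
    intro L
    induction L with
    | zero => intro v hv; simp only [encF]; exact measurable_const
    | succ n ih =>
        intro v hv
        have h1 := ih v hv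
        have : (fun x => encF (v x) (n + 1)) = fun x => Nat.pair (encF (v x) n) (v x n) := rfl
        rw [this]
        exact (measurable_of_countable (fun p : ℕ × ℕ => Nat.pair p.1 p.2)).comp
          (h1.prodMk (hv n))
  have hmeas : Measurable H := by
    apply measurable_pi_lambda
    intro k
    exact hencF (2 ^ k) _ (fun t => hpair (2 ^ k + t))
  obtain ⟨g', hg'⟩ := hnice H hmeas
  refine ⟨gOf g', ?_⟩
  intro x hx
  -- good block decoding
  have hblock : ∀ k i, H x k = g' k → 2 ^ k ≤ i → i < 2 ^ (k + 1) →
      claimOf g' i = Nat.pair (y x i) (f x (y x i)) := by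
    intro k i hk hi1 hi2
    have hi0 : i ≠ 0 := by
      have : 0 < 2 ^ k := Nat.pow_pos (by norm_num)
      omega
    have hlog : Nat.log 2 i = k := Nat.log_eq_of_pow_le_of_lt_pow hi1 hi2
    have ht : i - 2 ^ k < 2 ^ k := by
      have : 2 ^ (k + 1) = 2 ^ k + 2 ^ k := by ring
      omega
    have hsum : 2 ^ k + (i - 2 ^ k) = i := by omega
    rw [claimOf, if_neg hi0, hlog, ← hk, hH]
    rw [entryF_encF _ _ _ ht, hsum]
  -- abbreviations for claims
  set a : ℕ → ℕ := fun i => (claimOf g' i).unpair.1 with ha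
  set b : ℕ → ℕ := fun i => (claimOf g' i).unpair.2 with hb
  have ha0 : a 0 = 0 := by simp [ha, claimOf]
  have hagood : ∀ k i, H x k = g' k → 2 ^ k ≤ i → i < 2 ^ (k + 1) → a i = y x i := by
    intro k i hk hi1 hi2
    simp [ha, hblock k i hk hi1 hi2]
  have hbgood : ∀ k i, H x k = g' k → 2 ^ k ≤ i → i < 2 ^ (k + 1) → b i = f x (y x i) := by
    intro k i hk hi1 hi2
    simp [hb, hblock k i hk hi1 hi2]
  -- every good block contains an unspoiled claim
  have hwin : ∀ k, H x k = g' k → ∃ i, 2 ^ k ≤ i ∧ i < 2 ^ (k + 1) ∧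
      ∀ j, j < i → a j ≠ a i := by
    intro k hk
    by_contra hcon
    push_neg at hcon
    -- for each i in the block, a spoiler exists
    have hsp : ∀ i ∈ Finset.Ico (2 ^ k) (2 ^ (k + 1)), ∃ j, j < i ∧ a j = a i := by
      intro i hi
      rw [Finset.mem_Ico] at hi
      exact hcon i hi.1 hi.2
    -- least spoiler
    have hpos : 0 < 2 ^ k := Nat.pow_pos (by norm_num)
    set φ : ℕ → ℕ := fun i =>
      if h : ∃ j, j < i ∧ a j = a i then Nat.find h else 0 with hφ
    have key : ∀ i ∈ Finset.Ico (2 ^ k) (2 ^ (k + 1)), φ i ∈ Finset.Ico 1 (2 ^ k) ∧ a (φ i) = a i := by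
      intro i hi
      have hii := hi
      rw [Finset.mem_Ico] at hii
      obtain ⟨j, hj⟩ := hsp i hi
      have hex : ∃ j, j < i ∧ a j = a i := ⟨j, hj⟩
      have hspec := Nat.find_spec hex
      have hφi : φ i = Nat.find hex := by rw [hφ]; simp [hex]
      rw [hφi]
      constructor
      · rw [Finset.mem_Ico]
        constructor
        · -- φ i ≥ 1 : else a 0 = a i = y x i > 0
          rcases Nat.eq_zero_or_pos (Nat.find hex) with h0 | h1
          · exfalso
            have := hspec.2
            rw [h0, ha0] at this
            have hay : a i = y x i := hagood k i hk hii.1 hii.2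
            have : y x i = 0 := by omega
            have hle : i ≤ y x i := (hymono x).le_apply
            omega
          · exact h1
        · -- φ i < 2^k : else φ i is in the good block, injectivity of y x
          by_contra hge
          push_neg at hge
          have hlt : Nat.find hex < i := hspec.1
          have hlt2 : Nat.find hex < 2 ^ (k + 1) := lt_trans hlt hii.2
          have h1 : a (Nat.find hex) = y x (Nat.find hex) := hagood k _ hk hge hlt2
          have h2 : a i = y x i := hagood k i hk hii.1 hii.2
          have : y x (Nat.find hex) = y x i := by rw [← h1, ← h2, hspec.2]
          have := (hymono x).injective this
          omega
      · exact hspec.2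
    have hinj : Set.InjOn φ ↑(Finset.Ico (2 ^ k) (2 ^ (k + 1))) := by
      intro i1 h1 i2 h2 heq
      have k1 := key i1 (by exact_mod_cast h1)
      have k2 := key i2 (by exact_mod_cast h2)
      have m1 : (2:ℕ) ^ k ≤ i1 ∧ i1 < 2 ^ (k+1) := by
        rw [← Finset.mem_Ico]; exact_mod_cast h1
      have m2 : (2:ℕ) ^ k ≤ i2 ∧ i2 < 2 ^ (k+1) := by
        rw [← Finset.mem_Ico]; exact_mod_cast h2
      have e1 : a i1 = y x i1 := hagood k i1 hk m1.1 m1.2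
      have e2 : a i2 = y x i2 := hagood k i2 hk m2.1 m2.2
      have : y x i1 = y x i2 := by
        rw [← e1, ← e2, ← k1.2, ← k2.2, heq]
      exact (hymono x).injective this
    have hcard := Finset.card_le_card_of_injOn φ (fun i hi => (key i hi).1) hinj
    rw [Nat.card_Ico, Nat.card_Ico] at hcard
    have : 2 ^ (k + 1) = 2 ^ k + 2 ^ k := by ring
    omega
  -- conclude: the target set is unbounded
  have hGinf := hg' x hx
  apply Set.infinite_of_not_bddAbove
  rintro ⟨N, hN⟩
  obtain ⟨k, hkG, hkN⟩ := hGinf.exists_gt N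
  obtain ⟨i, hi1, hi2, hiw⟩ := hwin k hkG
  set m := y x i with hm
  have ham : a i = m := hagood k i hkG hi1 hi2
  have hbm : b i = f x m := hbgood k i hkG hi1 hi2
  have hmem : m ∈ {n | (∃ k, y x k = n) ∧ f x n = gOf g' n} := by
    refine ⟨⟨i, rfl⟩, ?_⟩
    set S : Set ℕ := {j | (claimOf g' j).unpair.1 = m} with hS
    have hiS : i ∈ S := ham
    have hle : sInf S ≤ i := Nat.sInf_le hiS
    have hmemS : sInf S ∈ S := Nat.sInf_mem ⟨i, hiS⟩
    have hfind : sInf S = i := by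
      rcases lt_or_eq_of_le hle with hlt | heq
      · exfalso
        apply hiw _ hlt
        have h1 : a (sInf S) = m := hmemS
        rw [h1, ham]
      · exact heq
    show f x m = gOf g' m
    rw [gOf, ← hS, hfind]
    exact hbm.symm
  have hmN : N < m := by
    have h1 : i ≤ m := (hymono x).le_apply
    have h2 : k < 2 ^ k := Nat.lt_two_pow_self
    omega
  exact absurd (hN hmem) (not_le.2 hmN)
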